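/- Let (D, M) be a local one-dimensional domain such that every proper principal ideal of D has a factorization into 2-absorbing ideals. Then D is atomic (every nonzero nonunit is a finite product of irreducible elements). -/

import Mathlib

/-- An ideal is 2-absorbing if whenever a product of three elements lies in it,
the product of some two of them lies in it. -/
def IsTwoAbsorbing {R : Type*} [CommRing R] (I : Ideal R) : Prop :=
  ∀ a b c : R, a * b * c ∈ I → a * b ∈ I ∨ a * c ∈ I ∨ b * c ∈ I

/-- A TAF-ring: every proper ideal is a finite product of proper 2-absorbing ideals. -/
def IsTAFRing (R : Type*) [CommRing R] : Prop :=
  ∀ I : Ideal R, I ≠ ⊤ → ∃ (n : ℕ) (J : Fin n → Ideal R),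
    (∀ i, J i ≠ ⊤ ∧ IsTwoAbsorbing (J i)) ∧ I = ∏ i, J i

open scoped Pointwise

section Aux

variable {D : Type*} [CommRing D] [IsDomain D] [IsLocalRing D]

private lemma prime_eq_max (hdim : ringKrullDim D = 1) (p : Ideal D) (hp : p.IsPrime)
    (hp0 : p ≠ ⊥) : p = IsLocalRing.maximalIdeal D := by
  by_contra hne
  have hM : (IsLocalRing.maximalIdeal D).IsPrime := inferInstance
  have hle : p < IsLocalRing.maximalIdeal D :=
    lt_of_le_of_ne (IsLocalRing.le_maximalIdeal hp.ne_top) hne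
  have h1 : (⟨⊥, Ideal.bot_prime⟩ : PrimeSpectrum D) < ⟨p, hp⟩ :=
    (PrimeSpectrum.asIdeal_lt_asIdeal _ _).mp (Ne.bot_lt hp0)
  have h2 : (⟨p, hp⟩ : PrimeSpectrum D) < ⟨IsLocalRing.maximalIdeal D, hM⟩ :=
    (PrimeSpectrum.asIdeal_lt_asIdeal _ _).mp hle
  let c : LTSeries (PrimeSpectrum D) :=
    ((RelSeries.singleton _ (⟨⊥, Ideal.bot_prime⟩ : PrimeSpectrum D)).snoc ⟨p, hp⟩ h1).snoc
      ⟨IsLocalRing.maximalIdeal D, hM⟩ (by exact h2)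
  have hlen : c.length = 2 := rfl
  have := Order.LTSeries.length_le_krullDim c
  rw [hlen] at this
  rw [show ringKrullDim D = Order.krullDim (PrimeSpectrum D) from rfl] at hdim
  rw [hdim] at this
  norm_num at this

private lemma principal_of_mul_eq_span {I K : Ideal D} {x : D} (hx : x ≠ 0)
    (h : I * K = Ideal.span {x}) : ∃ t, I = Ideal.span {t} := by
  haveI := Classical.decEq D
  have hxm : x ∈ I * K := h ▸ Ideal.mem_span_singleton_self x
  obtain ⟨T, T', hT, hT', hspan⟩ := Submodule.mem_span_mul_finite_of_mem_mul hxm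
  rw [← Finset.coe_mul, Submodule.mem_span_finset] at hspan
  obtain ⟨f, -, hf⟩ := hspan
  have hmem : ∀ p ∈ T * T', p ∈ Ideal.span ({x} : Set D) := by
    intro p hp
    rw [Finset.mem_mul] at hp
    obtain ⟨t, ht, t', ht', rfl⟩ := hp
    rw [← h]
    exact Submodule.mul_mem_mul (hT ht) (hT' ht')
  choose c hc using fun p (hp : p ∈ T * T') => Ideal.mem_span_singleton'.mp (hmem p hp)
  have hsum : x * (∑ p ∈ (T * T').attach, f p.1 * c p.1 p.2) = x := by
    rw [Finset.mul_sum]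
    calc ∑ p ∈ (T * T').attach, x * (f p.1 * c p.1 p.2)
        = ∑ p ∈ (T * T').attach, f p.1 • (p.1 : D) :=
          Finset.sum_congr rfl fun p _ => by
            rw [smul_eq_mul]; linear_combination (f p.1) * (hc p.1 p.2)
      _ = ∑ p ∈ T * T', f p • p := Finset.sum_attach (T * T') (fun y => f y • y)
      _ = x := hf
  have hsum1 : ∑ p ∈ (T * T').attach, f p.1 * c p.1 p.2 = 1 :=
    mul_left_cancel₀ hx (by rw [hsum, mul_one])
  have hexu : ∃ p ∈ (T * T').attach, IsUnit (f p.1 * c p.1 p.2) := by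
    by_contra hno
    push_neg at hno
    have h1 : (1 : D) ∈ IsLocalRing.maximalIdeal D := by
      rw [← hsum1]
      exact Ideal.sum_mem _ fun p hp => hno p hp
    exact (IsLocalRing.maximalIdeal D).ne_top_iff_one.mp
      (Ideal.IsMaximal.ne_top inferInstance) h1
  obtain ⟨⟨p, hp⟩, -, hu⟩ := hexu
  obtain ⟨t, ht, t', ht', rfl⟩ := Finset.mem_mul.mp hp
  have hu' : IsUnit (f (t * t') * c (t * t') hp) := hu
  obtain ⟨v, hv⟩ := hu'
  have hct : c (t * t') hp * x = t * t' := hc _ hp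
  refine ⟨t, le_antisymm ?_ ((Ideal.span_singleton_le_iff_mem I).mpr (hT ht))⟩
  have ht'0 : t' ≠ 0 := by
    rintro rfl
    have h0 : c (t * 0) hp * x = 0 := hct.trans (mul_zero t)
    have hc0 : c (t * 0) hp = 0 := by
      rcases mul_eq_zero.mp h0 with h0 | h0
      · exact h0
      · exact absurd h0 hx
    have : (v : D) = 0 := by rw [hv, hc0, mul_zero]
    exact v.ne_zero this
  intro a ha
  have hat : a * t' ∈ Ideal.span ({x} : Set D) := by
    rw [← h]; exact Submodule.mul_mem_mul ha (hT' ht')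
  obtain ⟨e, he⟩ := Ideal.mem_span_singleton'.mp hat
  have hvx : (v : D) * x = f (t * t') * (t * t') := by
    rw [hv, mul_assoc, hct]
  have hxval : x = ↑v⁻¹ * (f (t * t') * (t * t')) := by
    rw [← hvx, ← mul_assoc, Units.inv_mul, one_mul]
  rw [Ideal.mem_span_singleton']
  refine ⟨e * ↑v⁻¹ * f (t * t'), ?_⟩
  apply mul_left_cancel₀ ht'0
  calc t' * (e * ↑v⁻¹ * f (t * t') * t) = e * (↑v⁻¹ * (f (t * t') * (t * t'))) := by ring
    _ = e * x := by rw [← hxval]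
    _ = t' * a := by rw [he]; ring

private lemma ta_sq_of_pow {I : Ideal D} (h2 : IsTwoAbsorbing I) {a : D} :
    ∀ n : ℕ, 1 ≤ n → a ^ n ∈ I → a ^ 2 ∈ I := by
  intro n
  induction n using Nat.strong_induction_on with
  | _ n ih =>
    intro hn h
    match n, hn with
    | 1, _ => rw [pow_one] at h; rw [pow_two]; exact Ideal.mul_mem_left _ _ h
    | 2, _ => exact h
    | (k+3), _ =>
      have : a * a * a ^ (k+1) ∈ I := by
        rw [← pow_two, ← pow_add]; convert h using 2; omega
      rcases h2 a a (a ^ (k+1)) this with h' | h' | h'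
      · rw [pow_two]; exact h'
      · exact ih (k+2) (by omega) (by omega)
          (by rw [show a ^ (k+2) = a * a ^ (k+1) from by ring]; exact h')
      · exact ih (k+2) (by omega) (by omega)
          (by rw [show a ^ (k+2) = a * a ^ (k+1) from by ring]; exact h')

private lemma ta_mul_mem {I : Ideal D} (h2 : IsTwoAbsorbing I) {a b : D}
    (ha : a ^ 2 ∈ I) (hb : b ^ 2 ∈ I) : a * b ∈ I := by
  have habs : a * b * (a + b) ∈ I := by
    have h1 : b * a ^ 2 ∈ I := Ideal.mul_mem_left _ _ ha
    have h2' : a * b ^ 2 ∈ I := Ideal.mul_mem_left _ _ hb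
    have : a * b * (a + b) = b * a ^ 2 + a * b ^ 2 := by ring
    rw [this]; exact Ideal.add_mem _ h1 h2'
  rcases h2 a b (a + b) habs with h | h | h
  · exact h
  · have : a * b = a * (a + b) - a ^ 2 := by ring
    rw [this]; exact Ideal.sub_mem _ h ha
  · have : a * b = b * (a + b) - b ^ 2 := by ring
    rw [this]; exact Ideal.sub_mem _ h hb

private lemma gen_atoms (hdim : ringKrullDim D = 1) {y : D} (hy0 : y ≠ 0)
    (hyt : Ideal.span {y} ≠ ⊤) (h2 : IsTwoAbsorbing (Ideal.span {y})) :
    ∃ l : Multiset D, (∀ a ∈ l, Irreducible a) ∧ Associated l.prod y := by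
  set M := IsLocalRing.maximalIdeal D with hMdef
  have hsq : ∀ a ∈ M, a ^ 2 ∈ Ideal.span ({y} : Set D) := by
    intro a haM
    have hrad : a ∈ (Ideal.span ({y} : Set D)).radical := by
      rw [Ideal.radical_eq_sInf, Submodule.mem_sInf]
      rintro J ⟨hJle, hJp⟩
      have hJ0 : J ≠ ⊥ := by
        rintro rfl
        exact hy0 (Ideal.mem_bot.mp (hJle (Ideal.mem_span_singleton_self y)))
      rw [prime_eq_max hdim J hJp hJ0]
      exact haM
    obtain ⟨n, hn⟩ := hrad
    rcases Nat.eq_zero_or_pos n with rfl | hn1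
    · rw [pow_zero] at hn
      exact absurd ((Ideal.eq_top_iff_one _).mpr hn) hyt
    · exact ta_sq_of_pow h2 n hn1 hn
  have hMM : M * M ≤ Ideal.span {y} :=
    Ideal.mul_le.mpr fun a ha b hb => ta_mul_mem h2 (hsq a ha) (hsq b hb)
  by_cases hyM2 : y ∈ M * M
  · have hMMeq : M * M = Ideal.span {y} :=
      le_antisymm hMM ((Ideal.span_singleton_le_iff_mem _).mpr hyM2)
    obtain ⟨m, hm⟩ := principal_of_mul_eq_span hy0 hMMeq
    have hm0 : m ≠ 0 := by
      rintro rfl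
      have hb : Ideal.span ({y} : Set D) = ⊥ := by
        rw [← hMMeq, hm]; simp
      exact hy0 (Ideal.span_singleton_eq_bot.mp hb)
    have hmM : m ∈ M := hm ▸ Ideal.mem_span_singleton_self m
    have hmnu : ¬IsUnit m := fun h =>
      (IsLocalRing.mem_maximalIdeal m).mp hmM (by simpa using h)
    have hmirr : Irreducible m := by
      refine ⟨hmnu, fun a b hab => ?_⟩
      by_contra hc
      push_neg at hc
      obtain ⟨hca, hcb⟩ := hc
      have haM : a ∈ M := (IsLocalRing.mem_maximalIdeal a).mpr hca
      have hbM : b ∈ M := (IsLocalRing.mem_maximalIdeal b).mpr hcb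
      rw [hm, Ideal.mem_span_singleton] at haM hbM
      obtain ⟨s, rfl⟩ := haM
      obtain ⟨t, rfl⟩ := hbM
      have : (1 : D) = m * (s * t) := by
        apply mul_left_cancel₀ hm0
        rw [mul_one]
        nth_rewrite 1 [hab]
        ring
      exact hmnu (IsUnit.of_mul_eq_one (s * t) this.symm)
    have hspan2 : Ideal.span ({y} : Set D) = Ideal.span {m * m} := by
      rw [← hMMeq, hm, Ideal.span_singleton_mul_span_singleton]
    have hass : Associated (m * m) y :=
      Ideal.span_singleton_eq_span_singleton.mp hspan2.symm
    refine ⟨{m, m}, ?_, ?_⟩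
    · intro a ha
      rcases Multiset.mem_cons.mp ha with rfl | ha
      · exact hmirr
      · rw [Multiset.mem_singleton] at ha; subst ha; exact hmirr
    · simpa using hass
  · have hynu : ¬IsUnit y := fun h => hyt (Ideal.span_singleton_eq_top.mpr h)
    have hyirr : Irreducible y := by
      refine ⟨hynu, fun a b hab => ?_⟩
      by_contra hc
      push_neg at hc
      obtain ⟨hca, hcb⟩ := hc
      exact hyM2 (hab ▸ Ideal.mul_mem_mul
        ((IsLocalRing.mem_maximalIdeal a).mpr hca)
        ((IsLocalRing.mem_maximalIdeal b).mpr hcb))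
    refine ⟨{y}, by simpa using hyirr, ?_⟩
    rw [Multiset.prod_singleton]

end Aux

theorem atomic_of_principal_TA_factorization {D : Type*} [CommRing D] [IsDomain D]
    [IsLocalRing D] (hdim : ringKrullDim D = 1)
    (hfact : ∀ x : D, x ≠ 0 → ¬IsUnit x → ∃ (n : ℕ) (J : Fin n → Ideal D),
      (∀ i, J i ≠ ⊤ ∧ IsTwoAbsorbing (J i)) ∧ Ideal.span {x} = ∏ i, J i) :
    ∀ x : D, x ≠ 0 → ¬IsUnit x →
      ∃ l : Multiset D, (∀ a ∈ l, Irreducible a) ∧ Associated l.prod x := by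
  intro x hx0 hxu
  classical
  obtain ⟨n, J, hJ, hprod⟩ := hfact x hx0 hxu
  have hprin : ∀ i, ∃ t, J i = Ideal.span {t} := by
    intro i
    refine principal_of_mul_eq_span hx0 (K := ∏ j ∈ Finset.univ.erase i, J j) ?_
    rw [Finset.mul_prod_erase Finset.univ J (Finset.mem_univ i), ← hprod]
  choose y hy using hprin
  have hy0 : ∀ i, y i ≠ 0 := by
    intro i h0
    have hle : (∏ j, J j) ≤ J i := by
      rw [← Finset.prod_erase_mul Finset.univ J (Finset.mem_univ i)]
      exact Ideal.mul_le_right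
    rw [← hprod] at hle
    have : x ∈ J i := hle (Ideal.mem_span_singleton_self x)
    rw [hy i, h0] at this
    simp only [Ideal.span_singleton_eq_bot.mpr rfl, Ideal.mem_bot] at this
    exact hx0 this
  have hyt : ∀ i, Ideal.span {y i} ≠ ⊤ := fun i => (hy i) ▸ (hJ i).1
  have hyta : ∀ i, IsTwoAbsorbing (Ideal.span {y i}) := fun i => (hy i) ▸ (hJ i).2
  choose l hl1 hl2 using fun i => gen_atoms hdim (hy0 i) (hyt i) (hyta i)
  refine ⟨Finset.univ.val.bind fun i => l i, ?_, ?_⟩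
  · intro a ha
    rw [Multiset.mem_bind] at ha
    obtain ⟨i, _, hai⟩ := ha
    exact hl1 i a hai
  · have hp : (Finset.univ.val.bind fun i => l i).prod = ∏ i, (l i).prod := by
      rw [Multiset.prod_bind]
      rfl
    rw [hp]
    have h1 : Associated (∏ i, (l i).prod) (∏ i, y i) :=
      Associated.prod Finset.univ _ _ fun i _ => hl2 i
    have h2 : Associated (∏ i, y i) x := by
      rw [← Ideal.span_singleton_eq_span_singleton, ← Ideal.prod_span_singleton]
      rw [hprod]
      exact Finset.prod_congr rfl fun i _ => (hy i).symm
    exact h1.trans h2
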